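/- arXiv:2007.03470 — 2 statements merged into one kernel-verified Lean document; each statement's English description precedes it below -/
import Mathlib

section
/- Let V_i, V_j, V_{ij}, V_{ji} ∈ ℂ with V_i ≠ 0 and V_j ≠ 0, and let 0 < kmin ≤ kmax be reals. There exists k ∈ ℝ with kmin ≤ k ≤ kmax, V_{ij} = √k·V_i and V_{ji} = √k·V_j, if and only if: (a) kmin·|V_i|² ≤ |V_{ij}|² ≤ kmax·|V_i|², (b) kmin·|V_j|² ≤ |V_{ji}|² ≤ kmax·|V_j|², (c) V_{ij}·V_j* = V_i·V_{ji}*, (d) Im(V_i·V_{ij}*) = 0 and Im(V_j·V_{ji}*) = 0, and (e) Re(V_i·V_{ij}*) ≥ 0 and Re(V_j·V_{ji}*) ≥ 0. -/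
open Complex

/-- If `(z * conj w).im = 0` and `z ≠ 0`, then `w` is a real multiple of `z`. -/
lemma real_multiple_of_im_eq_zero (z w : ℂ) (hz : z ≠ 0)
    (him : (z * starRingEnd ℂ w).im = 0) :
    w = (((z * starRingEnd ℂ w).re / Complex.normSq z : ℝ) : ℂ) * z := by
  have hns : (Complex.normSq z : ℝ) ≠ 0 := by
    simpa [Complex.normSq_eq_zero] using hz
  have ha : (z * starRingEnd ℂ w) = (((z * starRingEnd ℂ w).re : ℝ) : ℂ) := by
    apply Complex.ext <;> simp [him]
  have hc : w * starRingEnd ℂ z = (((z * starRingEnd ℂ w).re : ℝ) : ℂ) := by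
    have := congrArg (starRingEnd ℂ) ha
    simpa [map_mul, mul_comm] using this
  have key : w * (Complex.normSq z : ℂ) = (((z * starRingEnd ℂ w).re : ℝ) : ℂ) * z := by
    calc w * (Complex.normSq z : ℂ) = w * (starRingEnd ℂ z * z) := by
          rw [← Complex.mul_conj]; ring
      _ = (w * starRingEnd ℂ z) * z := by ring
      _ = (((z * starRingEnd ℂ w).re : ℝ) : ℂ) * z := by rw [hc]
  have hinv : ((Complex.normSq z : ℝ) : ℂ) ≠ 0 := by exact_mod_cast hns
  rw [Complex.ofReal_div, div_mul_eq_mul_div, eq_div_iff hinv]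
  linear_combination key

theorem prop1_tap_ratio_iff
    (Vi Vj Vij Vji : ℂ) (hVi : Vi ≠ 0) (hVj : Vj ≠ 0)
    (kmin kmax : ℝ) (hkmin : 0 < kmin) (hk : kmin ≤ kmax) :
    (∃ k : ℝ, kmin ≤ k ∧ k ≤ kmax ∧
        Vij = (Real.sqrt k : ℂ) * Vi ∧ Vji = (Real.sqrt k : ℂ) * Vj)
    ↔ (kmin * ‖Vi‖ ^ 2 ≤ ‖Vij‖ ^ 2 ∧
        ‖Vij‖ ^ 2 ≤ kmax * ‖Vi‖ ^ 2 ∧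
        kmin * ‖Vj‖ ^ 2 ≤ ‖Vji‖ ^ 2 ∧
        ‖Vji‖ ^ 2 ≤ kmax * ‖Vj‖ ^ 2 ∧
        Vij * starRingEnd ℂ Vj = Vi * starRingEnd ℂ Vji ∧
        (Vi * starRingEnd ℂ Vij).im = 0 ∧
        (Vj * starRingEnd ℂ Vji).im = 0 ∧
        0 ≤ (Vi * starRingEnd ℂ Vij).re ∧
        0 ≤ (Vj * starRingEnd ℂ Vji).re) := by
  constructor
  · rintro ⟨k, hk1, hk2, rfl, rfl⟩
    have hk0 : 0 ≤ k := le_trans hkmin.le hk1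
    have hs : Real.sqrt k ^ 2 = k := Real.sq_sqrt hk0
    have hs0 : 0 ≤ Real.sqrt k := Real.sqrt_nonneg k
    have habsi : ‖((Real.sqrt k : ℂ) * Vi)‖ ^ 2 = k * ‖Vi‖ ^ 2 := by
      rw [norm_mul, mul_pow, Complex.norm_real, Real.norm_eq_abs, _root_.abs_of_nonneg hs0, hs]
    have habsj : ‖((Real.sqrt k : ℂ) * Vj)‖ ^ 2 = k * ‖Vj‖ ^ 2 := by
      rw [norm_mul, mul_pow, Complex.norm_real, Real.norm_eq_abs, _root_.abs_of_nonneg hs0, hs]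
    have hai : (0:ℝ) ≤ ‖Vi‖ ^ 2 := by positivity
    have haj : (0:ℝ) ≤ ‖Vj‖ ^ 2 := by positivity
    refine ⟨by rw [habsi]; nlinarith, by rw [habsi]; nlinarith,
      by rw [habsj]; nlinarith, by rw [habsj]; nlinarith, ?_, ?_, ?_, ?_, ?_⟩
    · simp only [map_mul, Complex.conj_ofReal]; ring
    · simp only [map_mul, Complex.conj_ofReal]
      have : Vi * ((Real.sqrt k : ℂ) * starRingEnd ℂ Vi)
          = (Real.sqrt k : ℂ) * (Complex.normSq Vi : ℂ) := by
        rw [← Complex.mul_conj]; ring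
      rw [this, ← Complex.ofReal_mul, Complex.ofReal_im]
    · simp only [map_mul, Complex.conj_ofReal]
      have : Vj * ((Real.sqrt k : ℂ) * starRingEnd ℂ Vj)
          = (Real.sqrt k : ℂ) * (Complex.normSq Vj : ℂ) := by
        rw [← Complex.mul_conj]; ring
      rw [this, ← Complex.ofReal_mul, Complex.ofReal_im]
    · simp only [map_mul, Complex.conj_ofReal]
      have : Vi * ((Real.sqrt k : ℂ) * starRingEnd ℂ Vi)
          = (Real.sqrt k : ℂ) * (Complex.normSq Vi : ℂ) := by
        rw [← Complex.mul_conj]; ring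
      rw [this, ← Complex.ofReal_mul, Complex.ofReal_re]
      exact mul_nonneg (Real.sqrt_nonneg k) (Complex.normSq_nonneg _)
    · simp only [map_mul, Complex.conj_ofReal]
      have : Vj * ((Real.sqrt k : ℂ) * starRingEnd ℂ Vj)
          = (Real.sqrt k : ℂ) * (Complex.normSq Vj : ℂ) := by
        rw [← Complex.mul_conj]; ring
      rw [this, ← Complex.ofReal_mul, Complex.ofReal_re]
      exact mul_nonneg (Real.sqrt_nonneg k) (Complex.normSq_nonneg _)
  · rintro ⟨h1, h2, h3, h4, hc, him1, him2, hre1, hre2⟩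
    set s : ℝ := (Vi * starRingEnd ℂ Vij).re / Complex.normSq Vi with hs_def
    set t : ℝ := (Vj * starRingEnd ℂ Vji).re / Complex.normSq Vj with ht_def
    have hsij : Vij = (s : ℂ) * Vi := real_multiple_of_im_eq_zero Vi Vij hVi him1
    have htji : Vji = (t : ℂ) * Vj := real_multiple_of_im_eq_zero Vj Vji hVj him2
    have hs0 : 0 ≤ s := div_nonneg hre1 (Complex.normSq_nonneg Vi)
    have ht0 : 0 ≤ t := div_nonneg hre2 (Complex.normSq_nonneg Vj)
    -- from condition (c), s = t
    have hst : s = t := by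
      rw [hsij, htji] at hc
      simp only [map_mul, Complex.conj_ofReal] at hc
      have h' : ((s : ℂ) - (t : ℂ)) * (Vi * starRingEnd ℂ Vj) = 0 := by
        linear_combination hc
      have hne : Vi * starRingEnd ℂ Vj ≠ 0 := by
        simp [hVi, hVj]
      have h0 : (s : ℂ) - (t : ℂ) = 0 := (mul_eq_zero.mp h').resolve_right hne
      have : (s : ℂ) = (t : ℂ) := sub_eq_zero.mp h0
      exact_mod_cast this
    refine ⟨s ^ 2, ?_, ?_, ?_, ?_⟩
    · have habs : ‖Vij‖ ^ 2 = s ^ 2 * ‖Vi‖ ^ 2 := by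
        rw [hsij, norm_mul, mul_pow, Complex.norm_real, Real.norm_eq_abs, _root_.abs_of_nonneg hs0]
      rw [habs] at h1
      have hpos : 0 < ‖Vi‖ ^ 2 := by
        have := norm_pos_iff.mpr hVi; positivity
      exact le_of_mul_le_mul_right (by nlinarith) hpos
    · have habs : ‖Vij‖ ^ 2 = s ^ 2 * ‖Vi‖ ^ 2 := by
        rw [hsij, norm_mul, mul_pow, Complex.norm_real, Real.norm_eq_abs, _root_.abs_of_nonneg hs0]
      rw [habs] at h2
      have hpos : 0 < ‖Vi‖ ^ 2 := by
        have := norm_pos_iff.mpr hVi; positivity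
      exact le_of_mul_le_mul_right (by nlinarith) hpos
    · rw [Real.sqrt_sq hs0]; exact hsij
    · rw [Real.sqrt_sq hs0, hst]; exact htji
end

section
/- Suppose W ∈ ℂ^{n×n} is Hermitian positive semidefinite of rank one, with recovered voltage vector V (i.e., W_{ab} = V_a V_b*). Fix indices i, i', j, j' with V_i ≠ 0 and V_j ≠ 0, and suppose W satisfies: W_{i'j} = W_{ij'}, Im(W_{ii'}) = 0, Im(W_{jj'}) = 0, Re(W_{ii'}) ≥ 0, Re(W_{jj'}) ≥ 0, and kmin·W_{ii} ≤ W_{i'i'} ≤ kmax·W_{ii} for reals 0 < kmin ≤ kmax. Then k := W_{i'i'}/W_{ii} is a real number in [kmin, kmax] and V_{i'} = √k·V_i, V_{j'} = √k·V_j. -/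
open Complex Matrix

theorem W_constraints_recover_tap_ratio
    (n : ℕ) (W : Matrix (Fin n) (Fin n) ℂ) (V : Fin n → ℂ)
    (hW : ∀ a b, W a b = V a * starRingEnd ℂ (V b))
    (i i' j j' : Fin n) (hVi : V i ≠ 0) (hVj : V j ≠ 0)
    (kmin kmax : ℝ) (hkmin : 0 < kmin) (hkk : kmin ≤ kmax)
    (hc : W i' j = W i j')
    (him1 : (W i i').im = 0) (him2 : (W j j').im = 0)
    (hre1 : 0 ≤ (W i i').re) (hre2 : 0 ≤ (W j j').re)
    (hlo : kmin * (W i i).re ≤ (W i' i').re)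
    (hhi : (W i' i').re ≤ kmax * (W i i).re) :
    ∃ k : ℝ, W i' i' / W i i = (k : ℂ) ∧ kmin ≤ k ∧ k ≤ kmax ∧
      V i' = (Real.sqrt k : ℂ) * V i ∧ V j' = (Real.sqrt k : ℂ) * V j := by
  set nI := Complex.normSq (V i) with hnI
  set nJ := Complex.normSq (V j) with hnJ
  have hnIpos : 0 < nI := Complex.normSq_pos.mpr hVi
  have hnJpos : 0 < nJ := Complex.normSq_pos.mpr hVj
  have hnIne : (nI : ℂ) ≠ 0 := by exact_mod_cast hnIpos.ne'
  have hnJne : (nJ : ℂ) ≠ 0 := by exact_mod_cast hnJpos.ne'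
  have hWii : W i i = (nI : ℂ) := by rw [hW]; exact Complex.mul_conj _
  have hWiire : (W i i).re = nI := by rw [hWii]; simp
  set r := (W i i').re with hr
  set s := (W j j').re with hs
  have h1 : V i * starRingEnd ℂ (V i') = (r : ℂ) := by
    rw [← hW]; exact Complex.ext rfl (by simpa using him1)
  have h2 : V j * starRingEnd ℂ (V j') = (s : ℂ) := by
    rw [← hW]; exact Complex.ext rfl (by simpa using him2)
  set c := r / nI with hcdef
  set d := s / nJ with hddef
  have hcnn : 0 ≤ c := div_nonneg hre1 hnIpos.le
  have hVi' : V i' = (c : ℂ) * V i := by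
    have h1' : starRingEnd ℂ (V i) * V i' = (r : ℂ) := by
      have := congrArg (starRingEnd ℂ) h1
      simpa [mul_comm] using this
    have : (nI : ℂ) * V i' = (r : ℂ) * V i := by
      calc (nI : ℂ) * V i' = V i * (starRingEnd ℂ (V i) * V i') := by
            rw [← mul_assoc, Complex.mul_conj]
        _ = (r : ℂ) * V i := by rw [h1']; ring
    field_simp [hcdef]
    have hc' : (c : ℂ) = (r : ℂ) / (nI : ℂ) := by rw [hcdef, Complex.ofReal_div]
    rw [hc']
    field_simp
    linear_combination this
  have hVj' : V j' = (d : ℂ) * V j := by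
    have h2' : starRingEnd ℂ (V j) * V j' = (s : ℂ) := by
      have := congrArg (starRingEnd ℂ) h2
      simpa [mul_comm] using this
    have : (nJ : ℂ) * V j' = (s : ℂ) * V j := by
      calc (nJ : ℂ) * V j' = V j * (starRingEnd ℂ (V j) * V j') := by
            rw [← mul_assoc, Complex.mul_conj]
        _ = (s : ℂ) * V j := by rw [h2']; ring
    field_simp [hddef]
    have hd' : (d : ℂ) = (s : ℂ) / (nJ : ℂ) := by rw [hddef, Complex.ofReal_div]
    rw [hd']
    field_simp
    linear_combination this
  have hcd : c = d := by
    have h3 : ((c : ℂ)) * (V i * starRingEnd ℂ (V j)) =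
        ((d : ℂ)) * (V i * starRingEnd ℂ (V j)) := by
      have := hc
      rw [hW, hW, hVi', hVj'] at this
      simpa [mul_comm, mul_assoc, mul_left_comm, _root_.map_mul] using this
    have hne : V i * starRingEnd ℂ (V j) ≠ 0 :=
      mul_ne_zero hVi (by simpa using hVj)
    have : (c : ℂ) = (d : ℂ) := mul_right_cancel₀ hne h3
    exact_mod_cast this
  have hWi'i' : W i' i' = ((c ^ 2 * nI : ℝ) : ℂ) := by
    rw [hW, hVi', _root_.map_mul, Complex.conj_ofReal]
    push_cast
    linear_combination (c : ℂ) ^ 2 * Complex.mul_conj (V i)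
  have hWi'i're : (W i' i').re = c ^ 2 * nI := by rw [hWi'i', Complex.ofReal_re]
  refine ⟨c ^ 2, ?_, ?_, ?_, ?_, ?_⟩
  · rw [hWi'i', hWii]
    push_cast
    field_simp
  · have := hlo
    rw [hWiire, hWi'i're] at this
    exact le_of_mul_le_mul_right (by linarith [this]) hnIpos
  · have := hhi
    rw [hWiire, hWi'i're] at this
    exact le_of_mul_le_mul_right (by linarith [this]) hnIpos
  · rw [Real.sqrt_sq hcnn]; exact hVi'
  · rw [Real.sqrt_sq hcnn, hVj', hcd]
end
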